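/- arXiv:1606.08909 — 4 statements merged into one kernel-verified Lean document; each statement's English description precedes it below -/
import Mathlib

section
/- Let \(\mathcal{D}\) be a 2-(v,k,\u03bb) design with b blocks in which every point lies in exactly r blocks, and let \(C_1 \subseteq \mathbb{F}_2^v\) be the linear span of the characteristic vectors of the blocks of \(\mathcal{D}\). Then every nonzero vector x in the dual code \(C_1^{\perp}\) satisfies \(\lambda \cdot \mathrm{wt}(x) \ge r + \lambda\), i.e., the minimum weight of \(C_1^{\perp}\) is at least \((r+\lambda)/\lambda\). -/
/-- The weight of a binary vector: its number of nonzero coordinates. -/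
def wt {ι : Type*} [Fintype ι] (x : ι → ZMod 2) : ℕ :=
  (Finset.univ.filter fun i => x i ≠ 0).card

/-- The characteristic vector of a block. -/
def chi {v : ℕ} (b : Finset (Fin v)) : Fin v → ZMod 2 :=
  fun i => if i ∈ b then 1 else 0

/-- If `𝓑` is the block set of a 2-(v,k,λ) design with `b` blocks and replication
number `r`, and `C₁` is the binary code spanned by the characteristic vectors of the
blocks, then every nonzero vector `x` of the dual code `C₁^⊥` satisfies
`λ · wt(x) ≥ r + λ`, i.e. the minimum weight of `C₁^⊥` is at least `(r + λ)/λ`. -/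
theorem dual_C1_min_weight (v k lam r : ℕ) (𝓑 : Finset (Finset (Fin v)))
    (hk : ∀ b ∈ 𝓑, b.card = k)
    (hlam : ∀ T : Finset (Fin v), T.card = 2 → (𝓑.filter fun b => T ⊆ b).card = lam)
    (hr : ∀ p : Fin v, (𝓑.filter fun b => p ∈ b).card = r)
    (x : Fin v → ZMod 2) (hx : x ≠ 0)
    (hdual : ∀ y ∈ Submodule.span (ZMod 2) (chi '' (𝓑 : Set (Finset (Fin v)))),
      ∑ i, x i * y i = 0) :
    r + lam ≤ lam * wt x := by
  classical
  set S : Finset (Fin v) := Finset.univ.filter (fun i => x i ≠ 0) with hS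
  have hone : ∀ a : ZMod 2, a ≠ 0 → a = 1 := by decide
  -- every block meets S in an even number of points
  have heven : ∀ b ∈ 𝓑, Even ((b.filter fun i => x i ≠ 0).card) := by
    intro b hb
    have hmem : chi b ∈ Submodule.span (ZMod 2) (chi '' (𝓑 : Set (Finset (Fin v)))) :=
      Submodule.subset_span ⟨b, hb, rfl⟩
    have h0 := hdual (chi b) hmem
    have hsum : ∑ i, x i * chi b i = ((b.filter fun i => x i ≠ 0).card : ZMod 2) := by
      have step1 : ∀ i ∈ Finset.univ,
          x i * chi b i = if i ∈ b then x i else 0 := by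
        intro i _
        unfold chi
        by_cases h : i ∈ b <;> simp [h]
      rw [Finset.sum_congr rfl step1, Finset.sum_ite_mem, Finset.univ_inter,
        ← Finset.sum_filter_ne_zero]
      rw [Finset.sum_congr rfl (fun i hi => hone (x i) (Finset.mem_filter.mp hi).2)]
      simp
    rw [hsum] at h0
    have hdvd : (2 : ℕ) ∣ (b.filter fun i => x i ≠ 0).card :=
      (ZMod.natCast_eq_zero_iff _ 2).mp h0
    obtain ⟨m, hm⟩ := hdvd
    exact ⟨m, by omega⟩
  -- pick a point p in the support of x
  have hxp : ∃ p, x p ≠ 0 := by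
    by_contra h
    push_neg at h
    exact hx (funext h)
  obtain ⟨p, hp⟩ := hxp
  have hpS : p ∈ S := Finset.mem_filter.mpr ⟨Finset.mem_univ p, hp⟩
  -- every block through p contains another support point
  have hsub : 𝓑.filter (fun b => p ∈ b) ⊆
      (S.erase p).biUnion (fun q => 𝓑.filter fun b => ({p, q} : Finset (Fin v)) ⊆ b) := by
    intro b hb
    rw [Finset.mem_filter] at hb
    obtain ⟨hb𝓑, hpb⟩ := hb
    have hpbS : p ∈ b.filter fun i => x i ≠ 0 := Finset.mem_filter.mpr ⟨hpb, hp⟩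
    have hcard2 : 1 < (b.filter fun i => x i ≠ 0).card := by
      have h1 : 0 < (b.filter fun i => x i ≠ 0).card := Finset.card_pos.mpr ⟨p, hpbS⟩
      have := heven b hb𝓑
      rcases this with ⟨m, hm⟩
      omega
    obtain ⟨q, hq, hqp⟩ := Finset.exists_mem_ne hcard2 p
    rw [Finset.mem_filter] at hq
    refine Finset.mem_biUnion.mpr ⟨q, ?_, ?_⟩
    · exact Finset.mem_erase.mpr ⟨hqp, Finset.mem_filter.mpr ⟨Finset.mem_univ q, hq.2⟩⟩
    · exact Finset.mem_filter.mpr ⟨hb𝓑, by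
        rw [Finset.insert_subset_iff, Finset.singleton_subset_iff]
        exact ⟨hpb, hq.1⟩⟩
  -- count
  have hcount : r ≤ lam * (S.erase p).card := by
    calc r = (𝓑.filter (fun b => p ∈ b)).card := (hr p).symm
      _ ≤ ((S.erase p).biUnion (fun q => 𝓑.filter fun b => ({p, q} : Finset (Fin v)) ⊆ b)).card :=
          Finset.card_le_card hsub
      _ ≤ ∑ q ∈ S.erase p, (𝓑.filter fun b => ({p, q} : Finset (Fin v)) ⊆ b).card :=
          Finset.card_biUnion_le
      _ = ∑ q ∈ S.erase p, lam := by
          refine Finset.sum_congr rfl fun q hq => ?_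
          have hqp : q ≠ p := (Finset.mem_erase.mp hq).1
          exact hlam _ (by rw [Finset.card_insert_of_notMem (by simp [hqp.symm]),
            Finset.card_singleton])
      _ = lam * (S.erase p).card := by rw [Finset.sum_const, smul_eq_mul, mul_comm]
  have hcardE : (S.erase p).card = S.card - 1 := Finset.card_erase_of_mem hpS
  have hSpos : 1 ≤ S.card := Finset.card_pos.mpr ⟨p, hpS⟩
  have hwt : wt x = S.card := rfl
  rw [hcardE] at hcount
  have key : lam * (S.card - 1) + lam = lam * S.card := by
    rw [← Nat.mul_succ]
    congr 1
    omega
  rw [hwt, ← key]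
  exact Nat.add_le_add_right hcount lam
end

section
/- Let \(\mathcal{D}\) be a quasi-symmetric 2-(v,k,\u03bb) design with intersection numbers x and y, where \(k \equiv 1 \pmod 4\) and both x and y are odd. Then the linear span \(C_3 \subseteq \mathbb{F}_2^{v+3}\) of the vectors \((\chi_B, 1, 1, 1)\), where \(\chi_B\) ranges over the characteristic vectors of the blocks of \(\mathcal{D}\), is a doubly even code: every codeword of \(C_3\) has weight divisible by 4. -/
def gen3 {v : ℕ} (b : Finset (Fin v)) : Fin v ⊕ Fin 3 → ZMod 2 :=
  Sum.elim (chi b) fun _ => 1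

open Finset

section aux
variable {ι : Type*} [Fintype ι] [DecidableEq ι]

/-- support -/
def supp (c : ι → ZMod 2) : Finset ι := Finset.univ.filter fun i => c i ≠ 0

lemma wt_eq (c : ι → ZMod 2) : wt c = (supp c).card := rfl

def dotp (c d : ι → ZMod 2) : ZMod 2 := ∑ i, c i * d i

lemma dotp_comm (c d : ι → ZMod 2) : dotp c d = dotp d c := by
  unfold dotp; exact Finset.sum_congr rfl fun i _ => mul_comm _ _

lemma dotp_add_right (c d e : ι → ZMod 2) : dotp c (d + e) = dotp c d + dotp c e := by
  unfold dotp; rw [← Finset.sum_add_distrib]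
  exact Finset.sum_congr rfl fun i _ => by simp [mul_add]

lemma dotp_smul_right (c : ι → ZMod 2) (r : ZMod 2) (d : ι → ZMod 2) :
    dotp c (r • d) = r * dotp c d := by
  unfold dotp; rw [Finset.mul_sum]
  exact Finset.sum_congr rfl fun i _ => by simp [Pi.smul_apply, smul_eq_mul]; ring

lemma dotp_eq_card (c d : ι → ZMod 2) :
    dotp c d = ((supp c ∩ supp d).card : ZMod 2) := by
  have h : ∀ a b : ZMod 2, a * b = if a ≠ 0 ∧ b ≠ 0 then 1 else 0 := by decide
  unfold dotp
  rw [show (∑ i, c i * d i) = ∑ i, (if c i ≠ 0 ∧ d i ≠ 0 then (1 : ZMod 2) else 0) from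
    Finset.sum_congr rfl fun i _ => h _ _, Finset.sum_boole]
  congr 1
  unfold supp
  rw [Finset.filter_and]

lemma supp_add (c d : ι → ZMod 2) :
    supp (c + d) = (supp c \ supp d) ∪ (supp d \ supp c) := by
  ext i
  have h : ∀ a b : ZMod 2, (a + b ≠ 0 ↔ (a ≠ 0 ∧ ¬b ≠ 0) ∨ (b ≠ 0 ∧ ¬a ≠ 0)) := by decide
  simp [supp, h (c i) (d i)]

lemma wt_add_eq (c d : ι → ZMod 2) :
    wt (c + d) + 2 * (supp c ∩ supp d).card = wt c + wt d := by
  rw [wt_eq, wt_eq, wt_eq, supp_add]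
  rw [Finset.card_union_of_disjoint (by
    exact disjoint_sdiff_sdiff)]
  have h1 := Finset.card_sdiff_add_card_inter (supp c) (supp d)
  have h2 := Finset.card_sdiff_add_card_inter (supp d) (supp c)
  rw [Finset.inter_comm] at h2
  omega

end aux

lemma supp_gen3 {v : ℕ} (b : Finset (Fin v)) :
    supp (gen3 b) = b.disjSum Finset.univ := by
  ext i
  cases i with
  | inl a => simp only [supp, Finset.mem_filter, Finset.mem_univ, true_and]; simp [gen3, chi]
  | inr a => simp only [supp, Finset.mem_filter, Finset.mem_univ, true_and]; simp [gen3]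

lemma wt_gen3 {v : ℕ} (b : Finset (Fin v)) : wt (gen3 b) = b.card + 3 := by
  rw [wt_eq, supp_gen3, Finset.card_disjSum]
  simp

lemma inter_supp_gen3 {v : ℕ} (b₁ b₂ : Finset (Fin v)) :
    (supp (gen3 b₁) ∩ supp (gen3 b₂)).card = (b₁ ∩ b₂).card + 3 := by
  rw [supp_gen3, supp_gen3]
  have : b₁.disjSum (Finset.univ : Finset (Fin 3)) ∩ b₂.disjSum Finset.univ
      = (b₁ ∩ b₂).disjSum Finset.univ := by
    ext i; cases i <;> simp
  rw [this, Finset.card_disjSum]; simp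

/-- If `𝓑` is the block set of a quasi-symmetric 2-(v,k,λ) design with intersection
numbers `x` and `y`, where `k ≡ 1 (mod 4)` and both `x` and `y` are odd, then the
linear span `C₃ ⊆ 𝔽₂^{v+3}` of the vectors `(χ_B, 1, 1, 1)` over the blocks `B` is
doubly even: every codeword has weight divisible by 4. -/
theorem C3_doubly_even (v k lam x y : ℕ) (𝓑 : Finset (Finset (Fin v)))
    (hk : ∀ b ∈ 𝓑, b.card = k)
    (hlam : ∀ T : Finset (Fin v), T.card = 2 → (𝓑.filter fun b => T ⊆ b).card = lam)
    (hxy : x < y)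
    (hquasi : ∀ b₁ ∈ 𝓑, ∀ b₂ ∈ 𝓑, b₁ ≠ b₂ →
      (b₁ ∩ b₂).card = x ∨ (b₁ ∩ b₂).card = y)
    (hkmod : k % 4 = 1) (hxodd : Odd x) (hyodd : Odd y) :
    ∀ c ∈ Submodule.span (ZMod 2) (gen3 '' (𝓑 : Set (Finset (Fin v)))), 4 ∣ wt c := by
  set S : Set ((Fin v ⊕ Fin 3) → ZMod 2) := gen3 '' (𝓑 : Set (Finset (Fin v))) with hS
  -- every generator is orthogonal to every element of the span
  have hgen : ∀ b₁ ∈ 𝓑, ∀ b₂ ∈ 𝓑, 2 ∣ (supp (gen3 b₁) ∩ supp (gen3 b₂)).card := by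
    intro b₁ hb₁ b₂ hb₂
    rw [inter_supp_gen3]
    by_cases hbe : b₁ = b₂
    · subst hbe
      rw [Finset.inter_self, hk b₁ hb₁]
      omega
    · rcases hquasi b₁ hb₁ b₂ hb₂ hbe with h | h <;> rw [h] <;>
        [rcases hxodd with ⟨m, rfl⟩; rcases hyodd with ⟨m, rfl⟩] <;> omega
  have hperp : ∀ b ∈ 𝓑, ∀ c ∈ Submodule.span (ZMod 2) S, dotp (gen3 b) c = 0 := by
    intro b hb c hc
    induction hc using Submodule.span_induction with
    | mem g hg =>
      obtain ⟨b', hb', rfl⟩ := hg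
      rw [dotp_eq_card, ZMod.natCast_eq_zero_iff]
      exact hgen b hb b' hb'
    | zero => simp [dotp]
    | add c d hc hd ihc ihd => rw [dotp_add_right, ihc, ihd, add_zero]
    | smul r c hc ihc => rw [dotp_smul_right, ihc, mul_zero]
  have hperp2 : ∀ c ∈ Submodule.span (ZMod 2) S, ∀ d ∈ Submodule.span (ZMod 2) S,
      dotp c d = 0 := by
    intro c hc d hd
    induction hd using Submodule.span_induction with
    | mem g hg =>
      obtain ⟨b', hb', rfl⟩ := hg
      rw [dotp_comm]
      exact hperp b' hb' c hc
    | zero => simp [dotp]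
    | add a b ha hb iha ihb => rw [dotp_add_right, iha, ihb, add_zero]
    | smul r a ha iha => rw [dotp_smul_right, iha, mul_zero]
  intro c hc
  induction hc using Submodule.span_induction with
  | mem g hg =>
    obtain ⟨b', hb', rfl⟩ := hg
    rw [wt_gen3, hk b' hb']
    omega
  | zero =>
    have : wt (0 : (Fin v ⊕ Fin 3) → ZMod 2) = 0 := by simp [wt]
    simp [this]
  | add c d hc hd ihc ihd =>
    have h0 : dotp c d = 0 := hperp2 c hc d hd
    rw [dotp_eq_card, ZMod.natCast_eq_zero_iff] at h0
    have := wt_add_eq c d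
    omega
  | smul r c hc ihc =>
    fin_cases r
    · show 4 ∣ wt ((0 : ZMod 2) • c)
      rw [zero_smul]
      simp [wt]
    · show 4 ∣ wt ((1 : ZMod 2) • c)
      rwa [one_smul]
end

section
/- Let \(\mathcal{D}\) be a quasi-symmetric 2-(v,k,\u03bb) design with b blocks, replication number r (every point lies in exactly r blocks), and intersection numbers x and y, where \(v \equiv 5 \pmod 8\), \(k \equiv 1 \pmod 4\), and x, y are odd. Let C be a doubly even self-dual code of length v+3 containing the linear span \(C_3\) of the vectors \((\chi_B, 1, 1, 1)\) over the blocks B of \(\mathcal{D}\). Then every nonzero codeword of C has weight at least \((b+r)/r\), i.e., \(r \cdot \mathrm{wt}(c) \ge b + r\) for all nonzero \(c \in C\). -/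
lemma zmod2_ne_zero {a : ZMod 2} (h : a ≠ 0) : a = 1 := by revert h; revert a; decide

lemma sum_zmod2 {ι : Type*} (A : Finset ι) (f : ι → ZMod 2) [DecidablePred fun i => f i ≠ 0] :
    ∑ i ∈ A, f i = ((A.filter fun i => f i ≠ 0).card : ZMod 2) := by
  rw [Finset.card_filter, Nat.cast_sum]
  apply Finset.sum_congr rfl
  intro i _
  by_cases hfi : f i = 0 <;> simp [hfi]
  exact zmod2_ne_zero hfi


/-- Let `𝓑` be the block set of a quasi-symmetric 2-(v,k,λ) design with `b` blocks,
replication number `r` and intersection numbers `x`, `y`, where `v ≡ 5 (mod 8)`,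
`k ≡ 1 (mod 4)` and `x`, `y` are odd.  If `C` is a doubly even self-dual code of
length `v+3` containing the span `C₃` of the vectors `(χ_B, 1, 1, 1)`, then every
nonzero codeword `c` of `C` satisfies `r · wt(c) ≥ b + r`, i.e. the minimum weight
of `C` is at least `(b + r)/r`. -/
theorem selfdual_containing_C3_min_weight (v k lam r x y : ℕ)
    (𝓑 : Finset (Finset (Fin v)))
    (hk : ∀ b ∈ 𝓑, b.card = k)
    (hlam : ∀ T : Finset (Fin v), T.card = 2 → (𝓑.filter fun b => T ⊆ b).card = lam)
    (hr : ∀ p : Fin v, (𝓑.filter fun b => p ∈ b).card = r)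
    (hxy : x < y)
    (hquasi : ∀ b₁ ∈ 𝓑, ∀ b₂ ∈ 𝓑, b₁ ≠ b₂ →
      (b₁ ∩ b₂).card = x ∨ (b₁ ∩ b₂).card = y)
    (hvmod : v % 8 = 5) (hkmod : k % 4 = 1) (hxodd : Odd x) (hyodd : Odd y)
    (C : Submodule (ZMod 2) (Fin v ⊕ Fin 3 → ZMod 2))
    (hselfdual : ∀ z : Fin v ⊕ Fin 3 → ZMod 2,
      z ∈ C ↔ ∀ c ∈ C, ∑ i, z i * c i = 0)
    (hde : ∀ c ∈ C, 4 ∣ wt c)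
    (hsub : Submodule.span (ZMod 2) (gen3 '' (𝓑 : Set (Finset (Fin v)))) ≤ C) :
    ∀ c ∈ C, c ≠ 0 → 𝓑.card + r ≤ r * wt c := by
  classical
  intro c hc hc0
  set S : Finset (Fin v) := Finset.univ.filter (fun a => c (Sum.inl a) ≠ 0) with hSdef
  set S' : Finset (Fin 3) := Finset.univ.filter (fun j => c (Sum.inr j) ≠ 0) with hS'def
  have hwt : wt c = S.card + S'.card := by
    have h1 : wt c = ∑ i : Fin v ⊕ Fin 3, if c i ≠ 0 then 1 else 0 := Finset.card_filter _ _
    rw [h1, Fintype.sum_sum_type, hSdef, hS'def, Finset.card_filter, Finset.card_filter]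
  -- orthogonality with the generators
  have horth : ∀ B ∈ 𝓑, 2 ∣ (B ∩ S).card + S'.card := by
    intro B hB
    have hmem : gen3 B ∈ C := hsub (Submodule.subset_span ⟨B, hB, rfl⟩)
    have h0 : ∑ i, c i * gen3 B i = 0 := (hselfdual c).mp hc (gen3 B) hmem
    rw [Fintype.sum_sum_type] at h0
    have h1 : ∀ a : Fin v, c (Sum.inl a) * gen3 B (Sum.inl a)
        = if a ∈ B then c (Sum.inl a) else 0 := by
      intro a
      simp only [gen3, Sum.elim_inl, chi, mul_ite, mul_one, mul_zero]
    have e1 : ∑ a : Fin v, c (Sum.inl a) * gen3 B (Sum.inl a) = ((B ∩ S).card : ZMod 2) := by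
      rw [Finset.sum_congr rfl (fun a _ => h1 a), Finset.sum_ite_mem,
        Finset.univ_inter, sum_zmod2]
      have : B.filter (fun a => c (Sum.inl a) ≠ 0) = B ∩ S := by
        rw [hSdef]; ext a
        simp [Finset.mem_filter, Finset.mem_inter]
      rw [this]
    have h2 : ∀ j : Fin 3, c (Sum.inr j) * gen3 B (Sum.inr j) = c (Sum.inr j) := by
      intro j; simp [gen3]
    have e2 : ∑ j : Fin 3, c (Sum.inr j) * gen3 B (Sum.inr j) = (S'.card : ZMod 2) := by
      rw [Finset.sum_congr rfl (fun j _ => h2 j), sum_zmod2]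
    rw [e1, e2, ← Nat.cast_add] at h0
    exact (ZMod.natCast_eq_zero_iff _ 2).mp h0
  -- counting lemma : pairs through a point
  have key_count : ∀ (p : Fin v) (T : Finset (Fin v)), p ∉ T →
      ∑ B ∈ 𝓑.filter (fun B => p ∈ B), (B ∩ T).card = T.card * lam := by
    intro p T hpT
    have h1 : ∀ B : Finset (Fin v), (B ∩ T).card = ∑ q ∈ T, if q ∈ B then 1 else 0 := by
      intro B
      rw [Finset.inter_comm, ← Finset.filter_mem_eq_inter, Finset.card_filter]
    calc ∑ B ∈ 𝓑.filter (fun B => p ∈ B), (B ∩ T).card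
        = ∑ B ∈ 𝓑.filter (fun B => p ∈ B), ∑ q ∈ T, if q ∈ B then 1 else 0 :=
          Finset.sum_congr rfl fun B _ => h1 B
      _ = ∑ q ∈ T, ∑ B ∈ 𝓑.filter (fun B => p ∈ B), if q ∈ B then 1 else 0 :=
          Finset.sum_comm
      _ = ∑ _q ∈ T, lam := by
          apply Finset.sum_congr rfl
          intro q hq
          rw [← Finset.card_filter, Finset.filter_filter]
          have hpq : p ≠ q := fun h => hpT (h ▸ hq)
          have hcard : ({p, q} : Finset (Fin v)).card = 2 := by
            rw [Finset.card_insert_of_notMem (by simp [hpq]), Finset.card_singleton]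
          rw [← hlam {p, q} hcard]
          congr 1
          apply Finset.filter_congr
          intro B _
          simp [Finset.insert_subset_iff]
      _ = T.card * lam := by rw [Finset.sum_const, smul_eq_mul]
  -- counting: incidences
  have count_all : ∀ T : Finset (Fin v), ∑ B ∈ 𝓑, (B ∩ T).card = T.card * r := by
    intro T
    have h1 : ∀ B : Finset (Fin v), (B ∩ T).card = ∑ q ∈ T, if q ∈ B then 1 else 0 := by
      intro B
      rw [Finset.inter_comm, ← Finset.filter_mem_eq_inter, Finset.card_filter]
    calc ∑ B ∈ 𝓑, (B ∩ T).card
        = ∑ B ∈ 𝓑, ∑ q ∈ T, if q ∈ B then 1 else 0 :=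
          Finset.sum_congr rfl fun B _ => h1 B
      _ = ∑ q ∈ T, ∑ B ∈ 𝓑, if q ∈ B then 1 else 0 := Finset.sum_comm
      _ = ∑ _q ∈ T, r := by
          apply Finset.sum_congr rfl
          intro q _
          rw [← Finset.card_filter, hr q]
      _ = T.card * r := by rw [Finset.sum_const, smul_eq_mul]
  rcases Finset.eq_empty_or_nonempty 𝓑 with hBemp | hBne
  · have hr0 : r = 0 := by
      have h := hr ⟨0, by omega⟩
      simp [hBemp] at h
      omega
    simp [hBemp, hr0]
  have hbk : 𝓑.card * k = v * r := by
    have h1 := count_all Finset.univ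
    have h2 : ∑ B ∈ 𝓑, (B ∩ Finset.univ).card = ∑ B ∈ 𝓑, k :=
      Finset.sum_congr rfl fun B hB => by rw [Finset.inter_univ]; exact hk B hB
    rw [h2, Finset.sum_const, smul_eq_mul] at h1
    rw [h1, Finset.card_univ, Fintype.card_fin]
  have hk1 : 1 ≤ k := by omega
  have hb1 : 1 ≤ 𝓑.card := Finset.card_pos.mpr hBne
  have hr1 : 1 ≤ r := by
    rcases Nat.eq_zero_or_pos r with h0 | h
    · rw [h0, Nat.mul_zero] at hbk
      have := Nat.mul_pos hb1 hk1
      omega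
    · exact h
  rcases Nat.even_or_odd S'.card with hev | hodd
  · -- even case : every block meets S evenly
    obtain ⟨t2, ht2⟩ := hev
    have heven : ∀ B ∈ 𝓑, 2 ∣ (B ∩ S).card := by
      intro B hB
      have := horth B hB
      omega
    rcases Finset.eq_empty_or_nonempty S with hSemp | hSne
    · exfalso
      have h4 : 4 ∣ wt c := hde c hc
      have hle : S'.card ≤ 3 := by
        have := Finset.card_le_univ S'
        simpa using this
      have hS0 : S.card = 0 := by rw [hSemp]; rfl
      have hS'0 : S'.card = 0 := by omega
      apply hc0
      funext i
      cases i with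
      | inl a =>
        show c (Sum.inl a) = 0
        by_contra hne
        have ha : a ∈ S := by rw [hSdef]; simp [hne]
        rw [hSemp] at ha
        exact absurd ha (Finset.notMem_empty a)
      | inr j =>
        show c (Sum.inr j) = 0
        by_contra hne
        have hj : j ∈ S' := by rw [hS'def]; simp [hne]
        have := Finset.card_pos.mpr ⟨j, hj⟩
        omega
    obtain ⟨p, hp⟩ := hSne
    have hfr : (𝓑.filter fun B => p ∈ B).card = r := hr p
    have hmeet : ∀ B ∈ 𝓑.filter (fun B => p ∈ B), 2 ≤ (B ∩ S).card := by
      intro B hB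
      rw [Finset.mem_filter] at hB
      have h2 := heven B hB.1
      have h1 : 0 < (B ∩ S).card :=
        Finset.card_pos.mpr ⟨p, Finset.mem_inter.mpr ⟨hB.2, hp⟩⟩
      omega
    obtain ⟨B₀, hB₀⟩ := Finset.card_pos.mp (show 0 < (𝓑.filter fun B => p ∈ B).card by omega)
    have hB₀mem : B₀ ∈ 𝓑 := (Finset.mem_filter.mp hB₀).1
    have hk2 : 2 ≤ k := by
      have h1 := hmeet B₀ hB₀
      have h2 : (B₀ ∩ S).card ≤ B₀.card := Finset.card_le_card Finset.inter_subset_left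
      rw [hk B₀ hB₀mem] at h2
      omega
    have hkv : k ≤ v := by
      have h := Finset.card_le_univ B₀
      rw [hk B₀ hB₀mem] at h
      simpa using h
    have hlam1 : 1 ≤ lam := by
      obtain ⟨T₂, hT₂sub, hT₂card⟩ := Finset.exists_subset_card_eq (hmeet B₀ hB₀)
      have hmem : B₀ ∈ 𝓑.filter fun b => T₂ ⊆ b :=
        Finset.mem_filter.mpr ⟨hB₀mem, hT₂sub.trans Finset.inter_subset_left⟩
      have h := Finset.card_pos.mpr ⟨B₀, hmem⟩
      rw [hlam T₂ hT₂card] at h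
      exact h
    have hid : (v - 1) * lam = r * (k - 1) := by
      have h1 := key_count p (Finset.univ.erase p) (Finset.notMem_erase p _)
      have h2 : ∀ B ∈ 𝓑.filter (fun B => p ∈ B), (B ∩ Finset.univ.erase p).card = k - 1 := by
        intro B hB
        rw [Finset.mem_filter] at hB
        rw [Finset.inter_erase, Finset.inter_univ, Finset.card_erase_of_mem hB.2, hk B hB.1]
      rw [Finset.sum_congr rfl h2, Finset.sum_const, smul_eq_mul, hfr,
        Finset.card_erase_of_mem (Finset.mem_univ p), Finset.card_univ,
        Fintype.card_fin] at h1
      exact h1.symm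
    have hrb : r ≤ (S.card - 1) * lam := by
      have h1 := key_count p (S.erase p) (Finset.notMem_erase p S)
      have h2 : ∀ B ∈ 𝓑.filter (fun B => p ∈ B), 1 ≤ (B ∩ S.erase p).card := by
        intro B hB
        rw [Finset.inter_erase, Finset.card_erase_of_mem
          (Finset.mem_inter.mpr ⟨(Finset.mem_filter.mp hB).2, hp⟩)]
        have := hmeet B hB
        omega
      calc r = ∑ _B ∈ 𝓑.filter (fun B => p ∈ B), 1 := by
              rw [Finset.sum_const, smul_eq_mul, hfr, Nat.mul_one]
        _ ≤ ∑ B ∈ 𝓑.filter (fun B => p ∈ B), (B ∩ S.erase p).card := Finset.sum_le_sum h2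
        _ = (S.erase p).card * lam := h1
        _ = (S.card - 1) * lam := by rw [Finset.card_erase_of_mem hp]
    set m := S.card - 1 with hm
    have hScard : S.card = m + 1 := by
      have := Finset.card_pos.mpr ⟨p, hp⟩
      omega
    have hlr : lam ≤ r := by
      apply Nat.le_of_mul_le_mul_right _ (show 0 < k - 1 by omega)
      calc lam * (k - 1) ≤ lam * (v - 1) := Nat.mul_le_mul le_rfl (by omega)
        _ = r * (k - 1) := by rw [← hid]; ring
    have hlvk : lam * v ≤ r * k := by
      have e1 : lam * v = lam * (v - 1) + lam := by
        have hv' : v - 1 + 1 = v := by omega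
        calc lam * v = lam * ((v - 1) + 1) := by rw [hv']
          _ = lam * (v - 1) + lam := by ring
      have e2 : r * k = r * (k - 1) + r := by
        have hk' : k - 1 + 1 = k := by omega
        calc r * k = r * ((k - 1) + 1) := by rw [hk']
          _ = r * (k - 1) + r := by ring
      have e3 : lam * (v - 1) = r * (k - 1) := by rw [← hid]; ring
      calc lam * v = r * (k - 1) + lam := by rw [e1, e3]
        _ ≤ r * (k - 1) + r := by omega
        _ = r * k := e2.symm
    have hlbr : lam * 𝓑.card ≤ r * r := by
      apply Nat.le_of_mul_le_mul_right _ (show 0 < k by omega)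
      calc lam * 𝓑.card * k = lam * (𝓑.card * k) := by ring
        _ = lam * (v * r) := by rw [hbk]
        _ = lam * v * r := by ring
        _ ≤ r * k * r := Nat.mul_le_mul hlvk le_rfl
        _ = r * r * k := by ring
    have hbrm : 𝓑.card ≤ r * m := by
      apply Nat.le_of_mul_le_mul_left _ (show 0 < lam by omega)
      calc lam * 𝓑.card ≤ r * r := hlbr
        _ ≤ r * (m * lam) := Nat.mul_le_mul le_rfl hrb
        _ = lam * (r * m) := by ring
    calc 𝓑.card + r ≤ r * m + r := by omega
      _ = r * (m + 1) := by ring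
      _ ≤ r * wt c := Nat.mul_le_mul le_rfl (by rw [hwt, hScard]; omega)
  · -- odd case : every block meets S
    obtain ⟨t, ht⟩ := hodd
    have hone : ∀ B ∈ 𝓑, 1 ≤ (B ∩ S).card := by
      intro B hB
      have := horth B hB
      omega
    have h2 : 𝓑.card ≤ S.card * r := by
      calc 𝓑.card = ∑ _B ∈ 𝓑, 1 := by rw [Finset.sum_const, smul_eq_mul, Nat.mul_one]
        _ ≤ ∑ B ∈ 𝓑, (B ∩ S).card := Finset.sum_le_sum hone
        _ = S.card * r := count_all S
    have h3 : r ≤ r * S'.card := by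
      have := Nat.mul_le_mul (le_refl r) (show 1 ≤ S'.card by omega)
      simpa using this
    calc 𝓑.card + r ≤ S.card * r + r * S'.card := by omega
      _ = r * (S.card + S'.card) := by ring
      _ = r * wt c := by rw [hwt]
end

section
/- Let \(\mathcal{D}\) be a quasi-symmetric 2-(37,9,8) design with intersection numbers 1 and 3, and let C be a doubly even self-dual code of length 40 containing the linear span \(C_3 \subseteq \mathbb{F}_2^{40}\) of the vectors \((\chi_B, 1, 1, 1)\) over the blocks B of \(\mathcal{D}\). Then the minimum weight of C is exactly 8 (in particular, every nonzero codeword of C has weight at least 8 and C contains a codeword of weight 8). -/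
namespace SDAux

/-! ### Elementary lemmas about `ZMod 2` and signs -/

/-- sign character on `ZMod 2`. -/
def sgn (x : ZMod 2) : ℤ := if x = 0 then 1 else -1

lemma sgn_add (a b : ZMod 2) : sgn (a + b) = sgn a * sgn b := by revert a b; decide

lemma sgn_add_one (a : ZMod 2) : sgn (a + 1) = - sgn a := by revert a; decide

lemma sgn_sum {ι : Type*} (S : Finset ι) (f : ι → ZMod 2) :
    sgn (∑ i ∈ S, f i) = ∏ i ∈ S, sgn (f i) := by
  induction S using Finset.cons_induction with
  | empty => simp [sgn]
  | cons a s ha ih => rw [Finset.sum_cons, Finset.prod_cons, sgn_add, ih]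

lemma zmod2_ne_zero {x : ZMod 2} (h : x ≠ 0) : x = 1 := by revert x; decide

/-- a sum of `ZMod 2` values is the cast of the number of nonzero terms. -/
lemma sum_zmod2 {ι : Type*} (s : Finset ι) (f : ι → ZMod 2) [DecidableEq ι] :
    ∑ i ∈ s, f i = (((s.filter fun i => f i ≠ 0)).card : ZMod 2) := by
  classical
  rw [← Finset.sum_filter_ne_zero]
  rw [Finset.sum_congr rfl (fun i hi => zmod2_ne_zero (Finset.mem_filter.mp hi).2)]
  simp

/-! ### Counting lemmas for the design -/

variable (𝓑 : Finset (Finset (Fin 37)))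

/-- every point lies on exactly 36 blocks. -/
lemma replication
    (hk : ∀ b ∈ 𝓑, b.card = 9)
    (hlam : ∀ T : Finset (Fin 37), T.card = 2 → (𝓑.filter fun b => T ⊆ b).card = 8)
    (p : Fin 37) : (𝓑.filter fun b => p ∈ b).card = 36 := by
  classical
  set Bp := 𝓑.filter fun b => p ∈ b with hBp
  have key : ∀ q ∈ Finset.univ.erase p, (Bp.filter fun b => q ∈ b).card = 8 := by
    intro q hq
    have hqp : q ≠ p := (Finset.mem_erase.mp hq).1
    rw [hBp, Finset.filter_filter]
    rw [← hlam {p, q} (by rw [Finset.card_insert_of_notMem (by simp [hqp.symm]),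
      Finset.card_singleton])]
    congr 1
    ext b
    simp [Finset.insert_subset_iff]
  have h1 : ∑ b ∈ Bp, (b.erase p).card = 8 * Bp.card := by
    rw [Finset.sum_congr rfl (fun b hb => ?_), Finset.sum_const, smul_eq_mul, mul_comm]
    have hb' := Finset.mem_filter.mp hb
    rw [Finset.card_erase_of_mem hb'.2, hk b hb'.1]
  have h2 : ∑ b ∈ Bp, (b.erase p).card = 288 := by
    have step : ∀ b ∈ Bp, (b.erase p).card
        = ∑ q ∈ Finset.univ.erase p, if q ∈ b then 1 else 0 := by
      intro b hb
      rw [← Finset.card_filter]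
      congr 1
      ext q
      simp only [Finset.mem_erase, Finset.mem_filter, Finset.mem_univ, true_and, and_comm]
    rw [Finset.sum_congr rfl step, Finset.sum_comm]
    have : ∀ q ∈ Finset.univ.erase p, (∑ b ∈ Bp, if q ∈ b then 1 else 0) = 8 := by
      intro q hq
      rw [← Finset.card_filter]
      exact key q hq
    rw [Finset.sum_congr rfl this, Finset.sum_const, smul_eq_mul]
    rw [Finset.card_erase_of_mem (Finset.mem_univ p)]
    simp
  omega

/-- the number of blocks is 148. -/
lemma blocks_card
    (hk : ∀ b ∈ 𝓑, b.card = 9)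
    (hlam : ∀ T : Finset (Fin 37), T.card = 2 → (𝓑.filter fun b => T ⊆ b).card = 8) :
    𝓑.card = 148 := by
  classical
  have h1 : ∑ b ∈ 𝓑, b.card = 9 * 𝓑.card := by
    rw [Finset.sum_congr rfl hk, Finset.sum_const, smul_eq_mul, mul_comm]
  have h2 : ∑ b ∈ 𝓑, b.card = 1332 := by
    have step : ∀ b ∈ 𝓑, b.card = ∑ q : Fin 37, if q ∈ b then 1 else 0 := by
      intro b _
      rw [← Finset.card_filter]
      congr 1
      ext q; simp
    rw [Finset.sum_congr rfl step, Finset.sum_comm]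
    have : ∀ q : Fin 37, (∑ b ∈ 𝓑, if q ∈ b then 1 else 0) = 36 := by
      intro q
      rw [← Finset.card_filter]
      exact replication 𝓑 hk hlam q
    rw [Finset.sum_congr rfl (fun q _ => this q), Finset.sum_const, smul_eq_mul]
    simp
  omega

/-- first double count : `∑_B |B ∩ U| = 36 |U|`. -/
lemma dc1
    (hk : ∀ b ∈ 𝓑, b.card = 9)
    (hlam : ∀ T : Finset (Fin 37), T.card = 2 → (𝓑.filter fun b => T ⊆ b).card = 8)
    (U : Finset (Fin 37)) : ∑ b ∈ 𝓑, (b ∩ U).card = 36 * U.card := by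
  classical
  have step : ∀ b ∈ 𝓑, (b ∩ U).card = ∑ q ∈ U, if q ∈ b then 1 else 0 := by
    intro b _
    rw [← Finset.card_filter]
    congr 1
    ext q
    simp [Finset.mem_inter, and_comm]
  rw [Finset.sum_congr rfl step, Finset.sum_comm]
  have : ∀ q ∈ U, (∑ b ∈ 𝓑, if q ∈ b then 1 else 0) = 36 := by
    intro q _
    rw [← Finset.card_filter]
    exact replication 𝓑 hk hlam q
  rw [Finset.sum_congr rfl this, Finset.sum_const, smul_eq_mul, mul_comm]

/-- second double count : `∑_B C(|B ∩ U|, 2) = 8 C(|U|,2)`. -/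
lemma dc2
    (hlam : ∀ T : Finset (Fin 37), T.card = 2 → (𝓑.filter fun b => T ⊆ b).card = 8)
    (U : Finset (Fin 37)) :
    ∑ b ∈ 𝓑, ((b ∩ U).card).choose 2 = 8 * (U.card.choose 2) := by
  classical
  have step : ∀ b ∈ 𝓑, ((b ∩ U).card).choose 2
      = ∑ T ∈ U.powersetCard 2, if T ⊆ b then 1 else 0 := by
    intro b _
    rw [← Finset.card_filter]
    have : (U.powersetCard 2).filter (fun T => T ⊆ b) = (b ∩ U).powersetCard 2 := by
      ext T
      simp only [Finset.mem_filter, Finset.mem_powersetCard, Finset.subset_inter_iff]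
      tauto
    rw [this, Finset.card_powersetCard]
  rw [Finset.sum_congr rfl step, Finset.sum_comm]
  have : ∀ T ∈ U.powersetCard 2, (∑ b ∈ 𝓑, if T ⊆ b then 1 else 0) = 8 := by
    intro T hT
    rw [← Finset.card_filter]
    exact hlam T (Finset.mem_powersetCard.mp hT).2
  rw [Finset.sum_congr rfl this, Finset.sum_const, smul_eq_mul, mul_comm,
    Finset.card_powersetCard]

/-- The design forces the code to have no codeword of weight 4. -/
lemma no_weight_four
    (hk : ∀ b ∈ 𝓑, b.card = 9)
    (hlam : ∀ T : Finset (Fin 37), T.card = 2 → (𝓑.filter fun b => T ⊆ b).card = 8)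
    (C : Submodule (ZMod 2) (Fin 37 ⊕ Fin 3 → ZMod 2))
    (hselfdual : ∀ z : Fin 37 ⊕ Fin 3 → ZMod 2,
      z ∈ C ↔ ∀ c ∈ C, ∑ i, z i * c i = 0)
    (hsub : Submodule.span (ZMod 2) (gen3 '' (𝓑 : Set (Finset (Fin 37)))) ≤ C) :
    ∀ c ∈ C, wt c ≠ 4 := by
  classical
  intro c hc hw4
  set U : Finset (Fin 37) := Finset.univ.filter (fun a => c (Sum.inl a) ≠ 0) with hU
  set t : ℕ := (Finset.univ.filter (fun j : Fin 3 => c (Sum.inr j) ≠ 0)).card with ht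
  have hwt : wt c = U.card + t := by
    rw [wt, Finset.card_filter, Fintype.sum_sum_type, ← Finset.card_filter,
      ← Finset.card_filter]
  have horth : ∀ b ∈ 𝓑, (((b ∩ U).card : ZMod 2) + (t : ZMod 2)) = 0 := by
    intro b hb
    have hgen : gen3 b ∈ C := hsub (Submodule.subset_span (Set.mem_image_of_mem _ hb))
    have h0 : ∑ i, c i * gen3 b i = 0 := (hselfdual c).mp hc (gen3 b) hgen
    rw [Fintype.sum_sum_type] at h0
    have hl : ∑ a : Fin 37, c (Sum.inl a) * gen3 b (Sum.inl a)
        = ((b ∩ U).card : ZMod 2) := by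
      have : ∀ a : Fin 37, c (Sum.inl a) * gen3 b (Sum.inl a)
          = if a ∈ b then c (Sum.inl a) else 0 := by
        intro a
        simp only [gen3, Sum.elim_inl, chi]
        split <;> simp
      rw [Finset.sum_congr rfl (fun a _ => this a), Finset.sum_ite_mem,
        Finset.univ_inter, sum_zmod2]
      congr 2
      ext a
      simp [hU, Finset.mem_inter, and_comm]
    have hr : ∑ j : Fin 3, c (Sum.inr j) * gen3 b (Sum.inr j) = (t : ZMod 2) := by
      have : ∀ j : Fin 3, c (Sum.inr j) * gen3 b (Sum.inr j) = c (Sum.inr j) := by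
        intro j; simp [gen3]
      rw [Finset.sum_congr rfl (fun j _ => this j), sum_zmod2, ht]
    rw [hl, hr] at h0
    exact h0
  have hpar : ∀ b ∈ 𝓑, 2 ∣ ((b ∩ U).card + t) := by
    intro b hb
    have := horth b hb
    rw [← Nat.cast_add, ZMod.natCast_eq_zero_iff] at this
    exact this
  have hUb : ∀ b ∈ 𝓑, (b ∩ U).card ≤ U.card :=
    fun b _ => Finset.card_le_card Finset.inter_subset_right
  have ht3 : t ≤ 3 := le_trans (Finset.card_filter_le _ _) (by simp)
  have hB : 𝓑.card = 148 := blocks_card 𝓑 hk hlam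
  have hd1 := dc1 𝓑 hk hlam U
  have hd2 := dc2 𝓑 hlam U
  have fib : ∀ (W : Finset ℕ), (∀ b ∈ 𝓑, (b ∩ U).card ∈ W) → ∀ (f : ℕ → ℕ),
      ∑ b ∈ 𝓑, f ((b ∩ U).card)
      = ∑ w ∈ W, (𝓑.filter fun b => (b ∩ U).card = w).card * f w := by
    intro W hW f
    rw [← Finset.sum_fiberwise_of_maps_to hW (fun b => f ((b ∩ U).card))]
    refine Finset.sum_congr rfl fun w hw => ?_
    rw [Finset.sum_congr rfl (fun b hb => by rw [(Finset.mem_filter.mp hb).2]),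
      Finset.sum_const, smul_eq_mul]
  have fibcard : ∀ (W : Finset ℕ), (∀ b ∈ 𝓑, (b ∩ U).card ∈ W) →
      𝓑.card = ∑ w ∈ W, (𝓑.filter fun b => (b ∩ U).card = w).card :=
    fun W hW => Finset.card_eq_sum_card_fiberwise hW
  interval_cases t
  · -- t = 0, |U| = 4
    have hU4 : U.card = 4 := by omega
    have hmem : ∀ b ∈ 𝓑, (b ∩ U).card ∈ ({0, 2, 4} : Finset ℕ) := by
      intro b hb
      have h1 := hpar b hb
      have h2 := hUb b hb
      simp only [Finset.mem_insert, Finset.mem_singleton]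
      omega
    have e1 := fib _ hmem id
    have e2 := fib _ hmem (fun n => n.choose 2)
    rw [Finset.sum_insert (by decide), Finset.sum_insert (by decide),
      Finset.sum_singleton] at e1 e2
    simp only [id] at e1
    rw [hd1, hU4] at e1
    rw [hd2, hU4] at e2
    simp only [show Nat.choose 0 2 = 0 from rfl, show Nat.choose 2 2 = 1 from rfl,
      show Nat.choose 4 2 = 6 from rfl] at e2
    norm_num at e1 e2
    omega
  · -- t = 1, |U| = 3
    have hU3 : U.card = 3 := by omega
    have hmem : ∀ b ∈ 𝓑, (b ∩ U).card ∈ ({1, 3} : Finset ℕ) := by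
      intro b hb
      have h1 := hpar b hb
      have h2 := hUb b hb
      simp only [Finset.mem_insert, Finset.mem_singleton]
      omega
    have e1 := fib _ hmem id
    have e2 := fib _ hmem (fun n => n.choose 2)
    have e3 := fibcard _ hmem
    rw [Finset.sum_insert (by decide), Finset.sum_singleton] at e1 e2 e3
    simp only [id] at e1
    rw [hd1, hU3] at e1
    rw [hd2, hU3] at e2
    rw [hB] at e3
    simp only [show Nat.choose 1 2 = 0 from rfl, show Nat.choose 3 2 = 3 from rfl] at e2
    norm_num at e1 e2
    omega
  · -- t = 2, |U| = 2
    have hU2 : U.card = 2 := by omega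
    have hmem : ∀ b ∈ 𝓑, (b ∩ U).card ∈ ({0, 2} : Finset ℕ) := by
      intro b hb
      have h1 := hpar b hb
      have h2 := hUb b hb
      simp only [Finset.mem_insert, Finset.mem_singleton]
      omega
    have e1 := fib _ hmem id
    have e2 := fib _ hmem (fun n => n.choose 2)
    rw [Finset.sum_insert (by decide), Finset.sum_singleton] at e1 e2
    simp only [id] at e1
    rw [hd1, hU2] at e1
    rw [hd2, hU2] at e2
    simp only [show Nat.choose 0 2 = 0 from rfl, show Nat.choose 2 2 = 1 from rfl] at e2
    norm_num at e1 e2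
    omega
  · -- t = 3, |U| = 1
    have hU1 : U.card = 1 := by omega
    have hmem : ∀ b ∈ 𝓑, (b ∩ U).card ∈ ({1} : Finset ℕ) := by
      intro b hb
      have h1 := hpar b hb
      have h2 := hUb b hb
      simp only [Finset.mem_singleton]
      omega
    have e1 := fib _ hmem id
    have e3 := fibcard _ hmem
    rw [Finset.sum_singleton] at e1 e3
    simp only [id] at e1
    rw [hd1, hU1] at e1
    rw [hB] at e3
    omega

/-! ### Generic code-theoretic lemmas -/

variable {V : Type*} [Fintype V] [DecidableEq V]

/-- indicator vector of a set of coordinates. -/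
def ind (S : Finset V) : V → ZMod 2 := fun i => if i ∈ S then 1 else 0

lemma ind_supp (c : V → ZMod 2) : ind (Finset.univ.filter fun i => c i ≠ 0) = c := by
  funext i
  by_cases h : c i = 0
  · simp [ind, h]
  · simp [ind, h, zmod2_ne_zero h]

lemma supp_ind (S : Finset V) : (Finset.univ.filter fun i => ind S i ≠ 0) = S := by
  ext i
  simp only [Finset.mem_filter, Finset.mem_univ, true_and, ind]
  by_cases h : i ∈ S <;> simp [h]

lemma wt_ind (S : Finset V) : wt (ind S) = S.card := by rw [wt, supp_ind]

section Code

variable (C : Submodule (ZMod 2) (V → ZMod 2)) [DecidablePred (· ∈ C)]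

/-- orthogonality relations for a self-dual code. -/
lemma orth
    (hselfdual : ∀ z : V → ZMod 2, z ∈ C ↔ ∀ c ∈ C, ∑ i, z i * c i = 0)
    (u : V → ZMod 2) :
    ∑ c ∈ Finset.univ.filter (· ∈ C), sgn (∑ i, u i * c i)
      = if u ∈ C then ((Finset.univ.filter (· ∈ C)).card : ℤ) else 0 := by
  set CF := Finset.univ.filter (· ∈ C) with hCF
  by_cases hu : u ∈ C
  · rw [if_pos hu]
    rw [Finset.sum_congr rfl (fun c hc => ?_), Finset.sum_const, nsmul_eq_mul, mul_one]
    rw [(hselfdual u).mp hu c (Finset.mem_filter.mp hc).2]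
    rfl
  · rw [if_neg hu]
    obtain ⟨c0, hc0C, hc00⟩ : ∃ c0 ∈ C, ∑ i, u i * c0 i ≠ 0 := by
      by_contra h
      push_neg at h
      exact hu ((hselfdual u).mpr h)
    have hc01 : ∑ i, u i * c0 i = 1 := zmod2_ne_zero hc00
    have hinv : ∀ c : V → ZMod 2, c + c0 + c0 = c := by
      intro c
      funext i
      simp only [Pi.add_apply]
      rw [add_assoc, CharTwo.add_self_eq_zero, add_zero]
    have hmm : ∀ c ∈ CF, c + c0 ∈ CF := by
      intro c hcf
      simp only [hCF, Finset.mem_filter, Finset.mem_univ, true_and] at hcf ⊢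
      exact C.add_mem hcf hc0C
    have hsplit : ∀ c : V → ZMod 2, (∑ i, u i * (c + c0) i) = (∑ i, u i * c i) + 1 := by
      intro c
      rw [← hc01, ← Finset.sum_add_distrib]
      exact Finset.sum_congr rfl fun i _ => by simp [Pi.add_apply, mul_add]
    have key : ∑ c ∈ CF, sgn (∑ i, u i * c i)
        = ∑ c ∈ CF, - sgn (∑ i, u i * c i) := by
      refine (Finset.sum_nbij' (fun c => c + c0) (fun c => c + c0)
        hmm hmm (fun c _ => hinv c) (fun c _ => hinv c)
        (g := fun c => sgn (∑ i, u i * (c + c0) i))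
        (fun c _ => by
          show sgn (∑ i, u i * c i) = sgn (∑ i, u i * ((c + c0) + c0) i)
          rw [hinv])).trans ?_
      exact Finset.sum_congr rfl fun c _ => by rw [hsplit, sgn_add_one]
    have : (2 : ℤ) * ∑ c ∈ CF, sgn (∑ i, u i * c i) = 0 := by
      rw [two_mul]
      nth_rewrite 2 [key]
      rw [← Finset.sum_add_distrib]
      simp
    linarith

/-- MacWilliams-type identity for a self-dual code, evaluated at an integer `x`. -/
lemma macwilliams
    (hselfdual : ∀ z : V → ZMod 2, z ∈ C ↔ ∀ c ∈ C, ∑ i, z i * c i = 0)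
    (x : ℤ) :
    ∑ c ∈ Finset.univ.filter (· ∈ C), (1 - x) ^ wt c * (1 + x) ^ (Fintype.card V - wt c)
      = ((Finset.univ.filter (· ∈ C)).card : ℤ)
          * ∑ c ∈ Finset.univ.filter (· ∈ C), x ^ wt c := by
  set CF := Finset.univ.filter (· ∈ C) with hCF
  have step1 : ∀ c : V → ZMod 2,
      (1 - x) ^ wt c * (1 + x) ^ (Fintype.card V - wt c)
        = ∏ i : V, (x * sgn (c i) + 1) := by
    intro c
    rw [← Finset.prod_filter_mul_prod_filter_not Finset.univ (fun i => c i ≠ 0)]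
    have h1 : ∏ i ∈ Finset.univ.filter (fun i => c i ≠ 0), (x * sgn (c i) + 1)
        = (1 - x) ^ wt c := by
      rw [Finset.prod_congr rfl (fun i hi => ?_), Finset.prod_const, wt]
      have : c i ≠ 0 := (Finset.mem_filter.mp hi).2
      simp [sgn, this]
      ring
    have h2 : ∏ i ∈ Finset.univ.filter (fun i => ¬ c i ≠ 0), (x * sgn (c i) + 1)
        = (1 + x) ^ (Fintype.card V - wt c) := by
      rw [Finset.prod_congr rfl (fun i hi => ?_), Finset.prod_const]
      · congr 1
        have := Finset.card_filter_add_card_filter_not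
          (s := Finset.univ) (p := fun i => c i ≠ 0)
        have hle : wt c ≤ Fintype.card V := by
          rw [wt]; exact le_trans (Finset.card_filter_le _ _) (le_of_eq (Finset.card_univ))
        have hu : (Finset.univ : Finset V).card = Fintype.card V := Finset.card_univ
        rw [wt] at *
        omega
      · have : c i = 0 := not_not.mp (Finset.mem_filter.mp hi).2
        simp [sgn, this]
        ring
    rw [h1, h2]
  have step2 : ∀ c : V → ZMod 2,
      (∏ i : V, (x * sgn (c i) + 1))
        = ∑ S ∈ (Finset.univ : Finset V).powerset,
            x ^ S.card * sgn (∑ i, ind S i * c i) := by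
    intro c
    rw [Finset.prod_add]
    refine Finset.sum_congr rfl fun S _ => ?_
    rw [Finset.prod_const_one, mul_one, Finset.prod_mul_distrib, Finset.prod_const]
    congr 1
    have : ∑ i, ind S i * c i = ∑ i ∈ S, c i := by
      calc ∑ i, ind S i * c i = ∑ i : V, (if i ∈ S then c i else 0) :=
            Finset.sum_congr rfl (fun i _ => by simp only [ind]; split <;> simp)
        _ = ∑ i ∈ Finset.univ ∩ S, c i := Finset.sum_ite_mem _ _ _
        _ = ∑ i ∈ S, c i := by rw [Finset.univ_inter]
    rw [this, sgn_sum]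
  calc ∑ c ∈ CF, (1 - x) ^ wt c * (1 + x) ^ (Fintype.card V - wt c)
       = ∑ c ∈ CF, ∑ S ∈ (Finset.univ : Finset V).powerset,
          x ^ S.card * sgn (∑ i, ind S i * c i) := by
        exact Finset.sum_congr rfl fun c _ => (step1 c).trans (step2 c)
    _ = ∑ S ∈ (Finset.univ : Finset V).powerset,
          x ^ S.card * ∑ c ∈ CF, sgn (∑ i, ind S i * c i) := by
        rw [Finset.sum_comm]
        exact Finset.sum_congr rfl fun S _ => by rw [Finset.mul_sum]
    _ = ∑ S ∈ (Finset.univ : Finset V).powerset,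
          (if ind S ∈ C then x ^ S.card * (CF.card : ℤ) else 0) := by
        refine Finset.sum_congr rfl fun S _ => ?_
        rw [orth C hselfdual (ind S), mul_ite, mul_zero]
    _ = ∑ S ∈ (Finset.univ : Finset V).powerset.filter (fun S => ind S ∈ C),
          x ^ S.card * (CF.card : ℤ) := (Finset.sum_filter _ _).symm
    _ = (CF.card : ℤ) * ∑ S ∈ (Finset.univ : Finset V).powerset.filter (fun S => ind S ∈ C),
          x ^ S.card := by
        rw [Finset.mul_sum]; exact Finset.sum_congr rfl fun S _ => mul_comm _ _
    _ = (CF.card : ℤ) * ∑ c ∈ CF, x ^ wt c := by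
        congr 1
        refine Finset.sum_nbij' (fun S => ind S)
          (fun c => Finset.univ.filter fun i => c i ≠ 0) ?_ ?_ ?_ ?_ ?_
        · intro S hS
          simp only [Finset.mem_filter] at hS
          simp only [hCF, Finset.mem_filter]
          exact ⟨Finset.mem_univ _, hS.2⟩
        · intro c hc
          simp only [hCF, Finset.mem_filter, Finset.mem_univ, true_and] at hc ⊢
          refine ⟨Finset.mem_powerset.mpr (Finset.subset_univ _), ?_⟩
          rw [ind_supp]
          exact hc
        · intro S _
          exact supp_ind S
        · intro c _
          exact ind_supp c
        · intro S _
          rw [wt_ind]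

end Code

end SDAux

set_option maxRecDepth 40000 in
/-- Let `𝓑` be the block set of a quasi-symmetric 2-(37,9,8) design with
intersection numbers 1 and 3, and let `C` be a doubly even self-dual code of
length 40 containing the span `C₃` of the vectors `(χ_B, 1, 1, 1)`.  Then the
minimum weight of `C` is exactly 8: every nonzero codeword has weight at least 8,
and `C` contains a codeword of weight 8. -/
theorem selfdual_code_min_weight_eight (𝓑 : Finset (Finset (Fin 37)))
    (hk : ∀ b ∈ 𝓑, b.card = 9)
    (hlam : ∀ T : Finset (Fin 37), T.card = 2 → (𝓑.filter fun b => T ⊆ b).card = 8)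
    (hquasi : ∀ b₁ ∈ 𝓑, ∀ b₂ ∈ 𝓑, b₁ ≠ b₂ →
      (b₁ ∩ b₂).card = 1 ∨ (b₁ ∩ b₂).card = 3)
    (C : Submodule (ZMod 2) (Fin 37 ⊕ Fin 3 → ZMod 2))
    (hselfdual : ∀ z : Fin 37 ⊕ Fin 3 → ZMod 2,
      z ∈ C ↔ ∀ c ∈ C, ∑ i, z i * c i = 0)
    (hde : ∀ c ∈ C, 4 ∣ wt c)
    (hsub : Submodule.span (ZMod 2) (gen3 '' (𝓑 : Set (Finset (Fin 37)))) ≤ C) :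
    (∀ c ∈ C, c ≠ 0 → 8 ≤ wt c) ∧ (∃ c ∈ C, wt c = 8) := by
  classical
  have hno4 : ∀ c ∈ C, wt c ≠ 4 := SDAux.no_weight_four 𝓑 hk hlam C hselfdual hsub
  have hwt0 : ∀ c : Fin 37 ⊕ Fin 3 → ZMod 2, wt c = 0 → c = 0 := by
    intro c h
    funext i
    rw [wt, Finset.card_eq_zero] at h
    by_contra hne
    have hmem : i ∈ (Finset.univ.filter fun i => c i ≠ 0) :=
      Finset.mem_filter.mpr ⟨Finset.mem_univ i, hne⟩
    rw [h] at hmem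
    simp at hmem
  refine ⟨?_, ?_⟩
  · intro c hc hc0
    have h4 := hde c hc
    have hn4 := hno4 c hc
    have hz : wt c ≠ 0 := fun h => hc0 (hwt0 c h)
    omega
  by_contra h8
  push_neg at h8
  -- h8 : ∀ c ∈ C, wt c ≠ 8
  set o : Fin 37 ⊕ Fin 3 → ZMod 2 := fun _ => 1 with ho
  have hcV : Fintype.card (Fin 37 ⊕ Fin 3) = 40 := by simp
  have hwle : ∀ c : Fin 37 ⊕ Fin 3 → ZMod 2, wt c ≤ 40 := by
    intro c
    rw [wt]
    calc (Finset.univ.filter fun i => c i ≠ 0).card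
        ≤ (Finset.univ : Finset (Fin 37 ⊕ Fin 3)).card := Finset.card_filter_le _ _
      _ = 40 := by rw [Finset.card_univ, hcV]
  have hsum_wt : ∀ c : Fin 37 ⊕ Fin 3 → ZMod 2, ∑ i, c i = ((wt c : ℕ) : ZMod 2) := by
    intro c
    rw [SDAux.sum_zmod2, wt]
  have hoC : o ∈ C := by
    rw [hselfdual]
    intro c hc
    have h1 : ∑ i, o i * c i = ∑ i, c i := Finset.sum_congr rfl fun i _ => one_mul _
    rw [h1, hsum_wt, ZMod.natCast_eq_zero_iff]
    have := hde c hc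
    omega
  have honez : ∀ y : ZMod 2, ((1 : ZMod 2) + y ≠ 0) ↔ y = 0 := by decide
  have hwcompl : ∀ c : Fin 37 ⊕ Fin 3 → ZMod 2, wt (o + c) = 40 - wt c := by
    intro c
    have hfil : (Finset.univ.filter fun i => (o + c) i ≠ 0)
        = Finset.univ.filter fun i => ¬ (c i ≠ 0) := by
      ext i
      simp only [Finset.mem_filter, Finset.mem_univ, true_and, Pi.add_apply, ho, not_not]
      exact honez (c i)
    have hsplit := Finset.card_filter_add_card_filter_not
      (s := (Finset.univ : Finset (Fin 37 ⊕ Fin 3))) (p := fun i => c i ≠ 0)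
    rw [Finset.card_univ, hcV] at hsplit
    have h2 : (Finset.univ.filter fun i => c i ≠ 0).card = wt c := rfl
    rw [wt, hfil]
    omega
  set CF := Finset.univ.filter (· ∈ C) with hCF
  have hmemW : ∀ c ∈ CF, wt c ∈ ({0, 12, 16, 20, 24, 28, 40} : Finset ℕ) := by
    intro c hcf
    have hc : c ∈ C := (Finset.mem_filter.mp hcf).2
    have h1 := hde c hc
    have h2 := hno4 c hc
    have h3 := h8 c hc
    have h4 := hwle c
    have hc' : o + c ∈ C := C.add_mem hoC hc
    have h5 := hno4 _ hc'
    have h6 := h8 _ hc'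
    rw [hwcompl c] at h5 h6
    simp only [Finset.mem_insert, Finset.mem_singleton]
    omega
  -- fiberwise versions of the two sides of the MacWilliams identity
  have hfibL : ∀ x : ℤ, ∑ c ∈ CF, (1 - x) ^ wt c * (1 + x) ^ (40 - wt c)
      = ∑ w ∈ ({0, 12, 16, 20, 24, 28, 40} : Finset ℕ),
          ((CF.filter fun c => wt c = w).card : ℤ) * ((1 - x) ^ w * (1 + x) ^ (40 - w)) := by
    intro x
    rw [← Finset.sum_fiberwise_of_maps_to hmemW
      (fun c => (1 - x) ^ wt c * (1 + x) ^ (40 - wt c))]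
    refine Finset.sum_congr rfl fun w hw => ?_
    rw [Finset.sum_congr rfl (fun c hc => by rw [(Finset.mem_filter.mp hc).2]),
      Finset.sum_const, nsmul_eq_mul]
  have hfibR : ∀ x : ℤ, ∑ c ∈ CF, x ^ wt c
      = ∑ w ∈ ({0, 12, 16, 20, 24, 28, 40} : Finset ℕ),
          ((CF.filter fun c => wt c = w).card : ℤ) * x ^ w := by
    intro x
    rw [← Finset.sum_fiberwise_of_maps_to hmemW (fun c => x ^ wt c)]
    refine Finset.sum_congr rfl fun w hw => ?_
    rw [Finset.sum_congr rfl (fun c hc => by rw [(Finset.mem_filter.mp hc).2]),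
      Finset.sum_const, nsmul_eq_mul]
  have hNsum : ((CF.card : ℕ) : ℤ) = ∑ w ∈ ({0, 12, 16, 20, 24, 28, 40} : Finset ℕ),
      ((CF.filter fun c => wt c = w).card : ℤ) := by
    rw [Finset.card_eq_sum_card_fiberwise hmemW]
    push_cast
    rfl
  have master : ∀ x : ℤ,
      ∑ w ∈ ({0, 12, 16, 20, 24, 28, 40} : Finset ℕ),
          ((CF.filter fun c => wt c = w).card : ℤ) * ((1 - x) ^ w * (1 + x) ^ (40 - w))
      = (CF.card : ℤ) * ∑ w ∈ ({0, 12, 16, 20, 24, 28, 40} : Finset ℕ),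
          ((CF.filter fun c => wt c = w).card : ℤ) * x ^ w := by
    intro x
    have h := SDAux.macwilliams C hselfdual x
    rw [hcV] at h
    rw [hfibL x, hfibR x] at h
    exact h
  -- fiber cardinalities
  have hwto : wt o = 40 := by
    rw [wt, Finset.filter_true_of_mem (fun i _ => by simp [ho]), Finset.card_univ, hcV]
  have hn0 : (CF.filter fun c => wt c = 0).card = 1 := by
    have : CF.filter (fun c => wt c = 0) = {0} := by
      ext c
      simp only [Finset.mem_filter, Finset.mem_singleton, hCF, Finset.mem_univ, true_and]
      constructor
      · rintro ⟨-, h⟩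
        exact hwt0 c h
      · rintro rfl
        refine ⟨C.zero_mem, ?_⟩
        simp [wt]
    rw [this, Finset.card_singleton]
  have hn40 : (CF.filter fun c => wt c = 40).card = 1 := by
    have : CF.filter (fun c => wt c = 40) = {o} := by
      ext c
      simp only [Finset.mem_filter, Finset.mem_singleton, hCF, Finset.mem_univ, true_and]
      constructor
      · rintro ⟨-, h⟩
        have huniv : (Finset.univ.filter fun i => c i ≠ 0)
            = (Finset.univ : Finset (Fin 37 ⊕ Fin 3)) := by
          apply Finset.eq_univ_of_card
          rw [← wt, h, hcV]
        funext i
        have hifil : i ∈ Finset.univ.filter fun i => c i ≠ 0 := by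
          rw [huniv]; exact Finset.mem_univ i
        have hne := (Finset.mem_filter.mp hifil).2
        exact SDAux.zmod2_ne_zero hne
      · rintro rfl
        exact ⟨hoC, hwto⟩
    rw [this, Finset.card_singleton]
  have haddinv : ∀ c : Fin 37 ⊕ Fin 3 → ZMod 2, o + (o + c) = c := by
    intro c
    funext i
    simp only [Pi.add_apply, ho]
    rw [← add_assoc, show (1 : ZMod 2) + 1 = 0 by decide, zero_add]
  have hcompl_card : ∀ w w' : ℕ, w + w' = 40 →
      (CF.filter fun c => wt c = w).card = (CF.filter fun c => wt c = w').card := by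
    intro w w' hww
    refine Finset.card_nbij' (fun c => o + c) (fun c => o + c) ?_ ?_ ?_ ?_
    · intro c hcmem
      have hc := Finset.mem_filter.mp hcmem
      have hcC : c ∈ C := (Finset.mem_filter.mp hc.1).2
      refine Finset.mem_filter.mpr ⟨Finset.mem_filter.mpr
        ⟨Finset.mem_univ _, C.add_mem hoC hcC⟩, ?_⟩
      rw [hwcompl c, hc.2]
      omega
    · intro c hcmem
      have hc := Finset.mem_filter.mp hcmem
      have hcC : c ∈ C := (Finset.mem_filter.mp hc.1).2
      refine Finset.mem_filter.mpr ⟨Finset.mem_filter.mpr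
        ⟨Finset.mem_univ _, C.add_mem hoC hcC⟩, ?_⟩
      rw [hwcompl c, hc.2]
      omega
    · intro c _
      exact haddinv c
    · intro c _
      exact haddinv c
  have hn28 : (CF.filter fun c => wt c = 28).card = (CF.filter fun c => wt c = 12).card :=
    hcompl_card 28 12 (by norm_num)
  have hn24 : (CF.filter fun c => wt c = 24).card = (CF.filter fun c => wt c = 16).card :=
    hcompl_card 24 16 (by norm_num)
  -- specialize and expand
  have E1 := master 1
  have E2 := master 2
  have E4 := master 4
  have E5 := master 5
  have E6 := master 6
  simp only [Finset.sum_insert (show (0:ℕ) ∉ ({12,16,20,24,28,40} : Finset ℕ) by decide),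
    Finset.sum_insert (show (12:ℕ) ∉ ({16,20,24,28,40} : Finset ℕ) by decide),
    Finset.sum_insert (show (16:ℕ) ∉ ({20,24,28,40} : Finset ℕ) by decide),
    Finset.sum_insert (show (20:ℕ) ∉ ({24,28,40} : Finset ℕ) by decide),
    Finset.sum_insert (show (24:ℕ) ∉ ({28,40} : Finset ℕ) by decide),
    Finset.sum_insert (show (28:ℕ) ∉ ({40} : Finset ℕ) by decide),
    Finset.sum_singleton] at E1 E2 E4 E5 E6 hNsum
  rw [hn0, hn40, hn28, hn24] at E1 E2 E4 E5 E6 hNsum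
  -- N² = 2^40, hence N = 2^20
  have hNN : ((CF.card : ℕ) : ℤ) * ((CF.card : ℕ) : ℤ) = 2 ^ 40 := by
    linear_combination ((CF.card : ℕ) : ℤ) * hNsum - E1
  have hNval : ((CF.card : ℕ) : ℤ) = 2 ^ 20 := by
    have hfac : (((CF.card : ℕ) : ℤ) - 2 ^ 20) * (((CF.card : ℕ) : ℤ) + 2 ^ 20) = 0 := by
      linear_combination hNN
    have hpos : (0 : ℤ) ≤ ((CF.card : ℕ) : ℤ) := Int.natCast_nonneg _
    rcases mul_eq_zero.mp hfac with h | h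
    · linarith
    · linarith
  rw [hNval] at E2 E4 E5 E6
  have contra : (11071267378074221708862812921583579383826924860588477644800000000 : ℤ)
      = 0 := by
    linear_combination
      (177014228761418973476742644627987426490112278528 : ℤ) * E2
      + (6834801181446904227681846403488808960 : ℤ) * E4
      + (-1337358852792929817482332297176177 : ℤ) * E5
      + (433327313745285109769162457088 : ℤ) * E6
  norm_num at contra
end
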